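/- Let n ≥ 2, δ ∈ (0,n], μ ∈ [0,1), p ∈ (δ/n, δ), and s ∈ (p(δ−μp)/(δ−p), ∞), and let Ω := B(0,1) \ {0} ⊂ ℝⁿ. Then for every η ∈ ℝ with 1 − δ/p < η ≤ −(δ−μp)/s (and such η exist since 1 − δ/p < −(δ−μp)/s), the function u₀(x) := |x|^η on Ω belongs to C¹(Ω) and satisfies: (a) for every b ∈ ℝ and every q ∈ (0,∞), ‖u₀ − b‖_{L^{s,q}(Ω, H_∞^{δ−μp})} = ∞; and (b) for every q̃ ∈ (0,∞), ‖∇u₀‖_{L^{p,q̃}(Ω, H_∞^{δ})} < ∞. In particular, the exponent p(δ−μp)/(δ−p) in the Poincaré–Sobolev inequality on Choquet–Lorentz integrals over bounded John domains cannot be replaced by any larger exponent s. -/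

import Mathlib

open Metric Set MeasureTheory Filter
open scoped ENNReal NNReal Topology RealInnerProductSpace

/-- The Hausdorff content of dimension `δ` of a set `K ⊆ ℝⁿ`. -/
noncomputable def hausdorffContent (n : ℕ) (δ : ℝ)
    (K : Set (EuclideanSpace ℝ (Fin n))) : ℝ≥0∞ :=
  ⨅ (c : ℕ → EuclideanSpace ℝ (Fin n) × ℝ≥0)
    (_ : K ⊆ ⋃ i, Metric.ball (c i).1 ((c i).2 : ℝ)),
    ∑' i, ((c i).2 : ℝ≥0∞) ^ δ

/-- The Lorentz quasinorm `‖f‖_{L^{p,q}(E, μC)}` (for finite `q`) with respect to a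
set function (content) `μC`. -/
noncomputable def lorNorm {X : Type*} (μC : Set X → ℝ≥0∞) (p q : ℝ)
    (E : Set X) (f : X → ℝ≥0∞) : ℝ≥0∞ :=
  (ENNReal.ofReal p * ∫⁻ t in Set.Ioi (0 : ℝ),
      ENNReal.ofReal (t ^ q) * μC {x ∈ E | ENNReal.ofReal t < f x} ^ (q / p)
        * ENNReal.ofReal t⁻¹) ^ (1 / q)

/-- The weak (`q = ∞`) Lorentz quasinorm `‖f‖_{L^{p,∞}(E, μC)}` with respect to a
set function (content) `μC`. -/
noncomputable def lorNormTop {X : Type*} (μC : Set X → ℝ≥0∞) (p : ℝ)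
    (E : Set X) (f : X → ℝ≥0∞) : ℝ≥0∞ :=
  ⨆ (t : ℝ) (_ : 0 < t), ENNReal.ofReal t * μC {x ∈ E | ENNReal.ofReal t < f x} ^ (1 / p)

/-- Interpret a real-valued function as an `ℝ≥0∞`-valued one via `|·|`. -/
noncomputable def ofRealFun {X : Type*} (f : X → ℝ) : X → ℝ≥0∞ :=
  fun x => ENNReal.ofReal |f x|

/-- `Ω` is a John domain with John center `x₀` and constants `a ≤ b`: every point of `Ω`
can be joined to `x₀` by a rectifiable curve, parameterized by arc length
(encoded as a `1`-Lipschitz parameterization), of length at most `b`, staying in `Ω`,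
whose distance to the boundary at time `t` is at least `(a / b) * t`. -/
def JohnFrom {n : ℕ} (x₀ : EuclideanSpace ℝ (Fin n)) (a b : ℝ)
    (Ω : Set (EuclideanSpace ℝ (Fin n))) : Prop :=
  x₀ ∈ Ω ∧ ∀ x ∈ Ω, ∃ (L : ℝ) (γ : ℝ → EuclideanSpace ℝ (Fin n)),
    0 ≤ L ∧ L ≤ b ∧ γ 0 = x ∧ γ L = x₀ ∧
    (∀ t ∈ Set.Icc 0 L, γ t ∈ Ω) ∧
    LipschitzOnWith 1 γ (Set.Icc 0 L) ∧
    ∀ t ∈ Set.Icc 0 L, a / b * t ≤ Metric.infDist (γ t) (frontier Ω)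

/-- A bounded `(a, b)`-John domain in `ℝⁿ`. -/
def IsJohnDomain {n : ℕ} (a b : ℝ) (Ω : Set (EuclideanSpace ℝ (Fin n))) : Prop :=
  IsOpen Ω ∧ IsConnected Ω ∧ Bornology.IsBounded Ω ∧ ∃ x₀, JohnFrom x₀ a b Ω

/-- The fractional Hardy–Littlewood maximal function of order `μ`. -/
noncomputable def fracMaximal (n : ℕ) (μ : ℝ) (f : EuclideanSpace ℝ (Fin n) → ℝ)
    (x : EuclideanSpace ℝ (Fin n)) : ℝ≥0∞ :=
  ⨆ (r : ℝ) (_ : 0 < r), ENNReal.ofReal (r ^ μ) *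
    ((∫⁻ y in Metric.ball x r, ENNReal.ofReal |f y| ∂volume) / volume (Metric.ball x r))

/-- The normalizing constant `c_α = π^{n/2} 2^α Γ(α/2) / Γ((n-α)/2)` of the Riesz potential. -/
noncomputable def rieszConst (n : ℕ) (a : ℝ) : ℝ :=
  Real.pi ^ ((n : ℝ) / 2) * 2 ^ a * Real.Gamma (a / 2) / Real.Gamma (((n : ℝ) - a) / 2)

/-- The Riesz potential `I_α f (x) = c_α⁻¹ ∫ f(y) |x - y|^{α - n} dy`. -/
noncomputable def rieszPotential (n : ℕ) (a : ℝ) (f : EuclideanSpace ℝ (Fin n) → ℝ)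
    (x : EuclideanSpace ℝ (Fin n)) : ℝ :=
  (rieszConst n a)⁻¹ * ∫ y, f y * ‖x - y‖ ^ (a - (n : ℝ)) ∂volume

lemma aux_hasGradientAt {n : ℕ} (η : ℝ) {x : EuclideanSpace ℝ (Fin n)} (hx : x ≠ 0) :
    HasGradientAt (fun y : EuclideanSpace ℝ (Fin n) => ‖y‖ ^ η)
      ((η * ‖x‖ ^ (η - 2)) • x) x := by
  have hnx : (0:ℝ) < ‖x‖ := norm_pos_iff.mpr hx
  have hix : (0:ℝ) < ⟪x, x⟫ := by
    rw [real_inner_self_eq_norm_sq]; positivity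
  have hinner : HasFDerivAt (fun y : EuclideanSpace ℝ (Fin n) => ⟪y, y⟫)
      ((fderivInnerCLM ℝ (x, x)).comp
        ((ContinuousLinearMap.id ℝ _).prod (ContinuousLinearMap.id ℝ _))) x :=
    (hasFDerivAt_id x).inner ℝ (hasFDerivAt_id x)
  have hrpow : HasDerivAt (fun t : ℝ => t ^ (η/2)) ((η/2) * (⟪x, x⟫) ^ (η/2 - 1)) ⟪x, x⟫ :=
    Real.hasDerivAt_rpow_const (Or.inl hix.ne')
  have hcomp := hrpow.comp_hasFDerivAt (f := fun y : EuclideanSpace ℝ (Fin n) => ⟪y, y⟫) x hinner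
  rw [hasGradientAt_iff_hasFDerivAt]
  have hfun : (fun y : EuclideanSpace ℝ (Fin n) => ‖y‖ ^ η)
      = (fun t : ℝ => t ^ (η/2)) ∘ (fun y : EuclideanSpace ℝ (Fin n) => ⟪y, y⟫) := by
    funext y
    simp only [Function.comp_apply, real_inner_self_eq_norm_sq]
    rw [← Real.rpow_natCast ‖y‖ 2, ← Real.rpow_mul (norm_nonneg y)]
    congr 1
    ring
  have hc : (⟪x, x⟫ : ℝ) ^ (η/2 - 1) = ‖x‖ ^ (η - 2) := by
    rw [real_inner_self_eq_norm_sq, ← Real.rpow_natCast ‖x‖ 2,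
      ← Real.rpow_mul (norm_nonneg x)]
    congr 1
    ring
  have hclm : InnerProductSpace.toDual ℝ (EuclideanSpace ℝ (Fin n)) ((η * ‖x‖ ^ (η - 2)) • x)
      = ((η/2) * (⟪x, x⟫) ^ (η/2 - 1)) • ((fderivInnerCLM ℝ (x, x)).comp
        ((ContinuousLinearMap.id ℝ _).prod (ContinuousLinearMap.id ℝ _))) := by
    apply ContinuousLinearMap.ext
    intro y
    simp only [InnerProductSpace.toDual_apply_apply, ContinuousLinearMap.smul_apply,
      ContinuousLinearMap.coe_comp', Function.comp_apply, ContinuousLinearMap.prod_apply,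
      ContinuousLinearMap.coe_id', id_eq, fderivInnerCLM_apply, smul_eq_mul]
    rw [real_inner_smul_left, hc, real_inner_comm y x]
    ring
  rw [hfun, hclm]
  exact hcomp

lemma aux_gradient_norm {n : ℕ} (η : ℝ) {x : EuclideanSpace ℝ (Fin n)} (hx : x ≠ 0) :
    ‖gradient (fun y : EuclideanSpace ℝ (Fin n) => ‖y‖ ^ η) x‖ = |η| * ‖x‖ ^ (η - 1) := by
  have hnx : (0:ℝ) < ‖x‖ := norm_pos_iff.mpr hx
  rw [(aux_hasGradientAt η hx).gradient, norm_smul, Real.norm_eq_abs, abs_mul,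
    abs_of_nonneg (Real.rpow_nonneg (norm_nonneg x) _), mul_assoc]
  congr 1
  rw [show η - 1 = (η - 2) + 1 by ring, Real.rpow_add hnx, Real.rpow_one]

lemma hc_mono {n : ℕ} (d : ℝ) {K K' : Set (EuclideanSpace ℝ (Fin n))} (h : K ⊆ K') :
    hausdorffContent n d K ≤ hausdorffContent n d K' :=
  le_iInf₂ fun c hc => iInf₂_le c (h.trans hc)

lemma hc_le {n : ℕ} {d : ℝ} (hd : 0 < d) (x₀ : EuclideanSpace ℝ (Fin n)) (R : ℝ)
    {K : Set (EuclideanSpace ℝ (Fin n))} (hK : K ⊆ ball x₀ R) :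
    hausdorffContent n d K ≤ ENNReal.ofReal R ^ d := by
  set c : ℕ → EuclideanSpace ℝ (Fin n) × ℝ≥0 :=
    fun i => if i = 0 then (x₀, R.toNNReal) else (x₀, 0) with hcdef
  have hcov : K ⊆ ⋃ i, Metric.ball (c i).1 ((c i).2 : ℝ) := by
    refine hK.trans ?_
    refine subset_trans (ball_subset_ball ?_) (subset_iUnion (fun i => Metric.ball (c i).1 ((c i).2 : ℝ)) 0)
    simp [hcdef, Real.coe_toNNReal', le_max_left]
  refine (iInf₂_le c hcov).trans ?_
  rw [tsum_eq_single 0 (fun i hi => by simp [hcdef, hi, ENNReal.zero_rpow_of_pos hd])]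
  simp only [hcdef, if_pos rfl]
  rw [ENNReal.ofReal]

lemma tsum_rpow_ge {b : ℕ → ℝ≥0∞} {p : ℝ} (hp : 1 ≤ p) :
    ∑' i, b i ^ p ≤ (∑' i, b i) ^ p := by
  set S := ∑' i, b i with hS
  calc ∑' i, b i ^ p ≤ ∑' i, b i * S ^ (p - 1) := by
        refine ENNReal.tsum_le_tsum fun i => ?_
        calc b i ^ p = b i * b i ^ (p - 1) := by
              rw [show p = 1 + (p - 1) by ring,
                ENNReal.rpow_add_of_nonneg _ _ zero_le_one (by linarith), ENNReal.rpow_one]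
              rw [show (1:ℝ) + (p - 1) - 1 = p - 1 by ring]
          _ ≤ b i * S ^ (p - 1) :=
              mul_le_mul' le_rfl (ENNReal.rpow_le_rpow (ENNReal.le_tsum i) (by linarith))
    _ = S * S ^ (p - 1) := ENNReal.tsum_mul_right
    _ = S ^ p := by
        rw [show p = 1 + (p - 1) by ring,
          ENNReal.rpow_add_of_nonneg _ _ zero_le_one (by linarith), ENNReal.rpow_one]
        rw [show (1:ℝ) + (p - 1) - 1 = p - 1 by ring]

lemma hc_ge {n : ℕ} (hn : 1 ≤ n) {d : ℝ} (hd : 0 < d) (hdn : d ≤ n) {r : ℝ} (hr : 0 < r) :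
    ENNReal.ofReal r ^ d
      ≤ hausdorffContent n d (ball (0 : EuclideanSpace ℝ (Fin n)) r \ {0}) := by
  haveI : Nontrivial (EuclideanSpace ℝ (Fin n)) :=
    Module.nontrivial_of_finrank_pos (R := ℝ)
      (by rw [finrank_euclideanSpace_fin]; omega)
  have hnd : (0:ℝ) < n := by exact_mod_cast Nat.lt_of_lt_of_le Nat.zero_lt_one hn
  refine le_iInf₂ fun c hc => ?_
  have hv0 : volume (ball (0 : EuclideanSpace ℝ (Fin n)) 1) ≠ 0 :=
    (measure_ball_pos _ _ one_pos).ne'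
  have hvt : volume (ball (0 : EuclideanSpace ℝ (Fin n)) 1) ≠ ⊤ :=
    measure_ball_lt_top.ne
  have hball : ∀ (x : EuclideanSpace ℝ (Fin n)) (ρ : ℝ≥0),
      volume (ball x (ρ:ℝ)) = ENNReal.ofReal ((ρ:ℝ) ^ n) * volume (ball (0 : EuclideanSpace ℝ (Fin n)) 1) := by
    intro x ρ
    rw [Measure.addHaar_ball volume x ρ.coe_nonneg, finrank_euclideanSpace_fin]
  have hvol : ENNReal.ofReal (r ^ n) * volume (ball (0 : EuclideanSpace ℝ (Fin n)) 1)
      ≤ (∑' i, ENNReal.ofReal (((c i).2 : ℝ) ^ n)) * volume (ball (0 : EuclideanSpace ℝ (Fin n)) 1) := by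
    calc ENNReal.ofReal (r ^ n) * volume (ball (0 : EuclideanSpace ℝ (Fin n)) 1)
        = volume (ball (0 : EuclideanSpace ℝ (Fin n)) r) := by
          rw [Measure.addHaar_ball volume _ hr.le, finrank_euclideanSpace_fin]
      _ = volume (ball (0 : EuclideanSpace ℝ (Fin n)) r \ {0}) :=
          (measure_diff_null (measure_singleton 0)).symm
      _ ≤ volume (⋃ i, ball (c i).1 ((c i).2 : ℝ)) := measure_mono hc
      _ ≤ ∑' i, volume (ball (c i).1 ((c i).2 : ℝ)) := measure_iUnion_le _
      _ = (∑' i, ENNReal.ofReal (((c i).2 : ℝ) ^ n)) * volume (ball (0 : EuclideanSpace ℝ (Fin n)) 1) := by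
          rw [← ENNReal.tsum_mul_right]
          exact tsum_congr fun i => hball _ _
  have h2 : ENNReal.ofReal (r ^ n) ≤ ∑' i, ENNReal.ofReal (((c i).2 : ℝ) ^ n) :=
    (ENNReal.mul_le_mul_iff_left hv0 hvt).mp hvol
  have h3 : ENNReal.ofReal r ^ (n : ℝ) ≤ ∑' i, ((c i).2 : ℝ≥0∞) ^ (n : ℝ) := by
    rw [ENNReal.ofReal_rpow_of_nonneg hr.le (Nat.cast_nonneg n), Real.rpow_natCast]
    refine h2.trans_eq (tsum_congr fun i => ?_)
    rw [← ENNReal.ofReal_coe_nnreal, ENNReal.ofReal_rpow_of_nonneg (c i).2.coe_nonneg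
      (Nat.cast_nonneg n), Real.rpow_natCast]
  have h4 : ∑' i, ((c i).2 : ℝ≥0∞) ^ (n : ℝ)
      ≤ (∑' i, ((c i).2 : ℝ≥0∞) ^ d) ^ ((n : ℝ) / d) := by
    refine le_trans (le_of_eq (tsum_congr fun i => ?_)) (tsum_rpow_ge ((one_le_div hd).mpr hdn))
    rw [← ENNReal.rpow_mul]
    congr 1
    field_simp
  have h5 := ENNReal.rpow_le_rpow (h3.trans h4) (le_of_lt (div_pos hd hnd))
  rw [← ENNReal.rpow_mul, ← ENNReal.rpow_mul] at h5
  rw [show (n : ℝ) * ((d : ℝ) / n) = d by field_simp, show (n : ℝ) / d * (d / n) = 1 by field_simp]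
    at h5
  rwa [ENNReal.rpow_one] at h5

lemma aux_lintegral_inv_top {C : ℝ} (hC : 0 < C) :
    ∫⁻ t in Ioi (1:ℝ), ENNReal.ofReal (C * t⁻¹) = ⊤ := by
  by_contra h
  have hmeas : Measurable fun t : ℝ => C * t⁻¹ := measurable_const.mul measurable_inv
  have hint : IntegrableOn (fun t : ℝ => C * t⁻¹) (Ioi 1) := by
    refine ⟨hmeas.aestronglyMeasurable, ?_⟩
    rw [hasFiniteIntegral_iff_ofReal ?_]
    · exact lt_top_iff_ne_top.mpr h
    · filter_upwards [ae_restrict_mem measurableSet_Ioi] with t ht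
      have h1 : (0:ℝ) < t := lt_trans one_pos ht
      positivity
  have h2 : IntegrableOn (fun t : ℝ => t ^ (-1:ℝ)) (Ioi 1) := by
    have h3 := hint.const_mul C⁻¹
    have h4 : (fun t : ℝ => C⁻¹ * (C * t⁻¹)) = fun t : ℝ => t ^ (-1:ℝ) := by
      funext t
      rw [Real.rpow_neg_one, ← mul_assoc, inv_mul_cancel₀ hC.ne']
      ring
    rwa [h4] at h3
  rw [integrableOn_Ioi_rpow_iff one_pos] at h2
  linarith

lemma part_a {n : ℕ} (hn : 2 ≤ n) {d η s : ℝ} (b q : ℝ) (hd : 0 < d) (hdn : d ≤ (n:ℝ))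
    (hs : 0 < s) (hη : η ≤ -d / s) (hq : 0 < q) :
    lorNorm (hausdorffContent n d) s q (ball (0 : EuclideanSpace ℝ (Fin n)) 1 \ {0})
      (ofRealFun fun x => ‖x‖ ^ η - b) = ⊤ := by
  have hη0 : η < 0 := lt_of_le_of_lt hη (by rw [neg_div]; exact neg_neg_of_pos (div_pos hd hs))
  have hηs : η * s ≤ -d := by rwa [← le_div_iff₀ hs]
  set α : ℝ := d * q / (η * s) with hα
  have hηsneg : η * s < 0 := mul_neg_of_neg_of_pos hη0 hs
  have hα0 : α ≤ 0 := le_of_lt (div_neg_of_pos_of_neg (by positivity) hηsneg)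
  have hαq : 0 ≤ q + α := by
    have : -q ≤ α := by
      rw [hα, le_div_iff_of_neg hηsneg]
      nlinarith
    linarith
  have hCpos : 0 < (2 + |b|) ^ α := Real.rpow_pos_of_pos (by positivity) _
  have hmain : ∀ t ∈ Ioi (1:ℝ),
      ENNReal.ofReal ((2 + |b|) ^ α * t⁻¹)
        ≤ ENNReal.ofReal (t ^ q) * hausdorffContent n d
            {x ∈ ball (0 : EuclideanSpace ℝ (Fin n)) 1 \ {0} |
              ENNReal.ofReal t < ofRealFun (fun x => ‖x‖ ^ η - b) x} ^ (q / s)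
          * ENNReal.ofReal t⁻¹ := by
    intro t ht
    rw [mem_Ioi] at ht
    have ht0 : 0 < t := lt_trans one_pos ht
    set ρ : ℝ := (t + |b| + 1) ^ (1 / η) with hρ
    have hb0 : (0:ℝ) ≤ |b| := abs_nonneg b
    have hbase : 1 ≤ t + |b| + 1 := by linarith
    have hbase0 : 0 < t + |b| + 1 := by linarith
    have hρpos : 0 < ρ := Real.rpow_pos_of_pos hbase0 _
    have hρ1 : ρ ≤ 1 := Real.rpow_le_one_of_one_le_of_nonpos hbase
      (by rw [one_div]; exact inv_nonpos.mpr hη0.le)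
    have hsub : ball (0 : EuclideanSpace ℝ (Fin n)) ρ \ {0} ⊆
        {x ∈ ball (0 : EuclideanSpace ℝ (Fin n)) 1 \ {0} |
          ENNReal.ofReal t < ofRealFun (fun x => ‖x‖ ^ η - b) x} := by
      rintro x ⟨hx1, hx2⟩
      have hx0 : x ≠ 0 := by simpa using hx2
      have hnx : 0 < ‖x‖ := norm_pos_iff.mpr hx0
      have hxlt : ‖x‖ < ρ := by simpa [mem_ball, dist_zero_right] using hx1
      refine ⟨⟨mem_ball.mpr ?_, hx2⟩, ?_⟩
      · rw [dist_zero_right]; exact lt_of_lt_of_le hxlt hρ1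
      · have h1 : ρ ^ η < ‖x‖ ^ η := Real.rpow_lt_rpow_of_neg hnx hxlt hη0
        have h2 : ρ ^ η = t + |b| + 1 := by
          rw [hρ, ← Real.rpow_mul hbase0.le, one_div, inv_mul_cancel₀ (ne_of_lt hη0),
            Real.rpow_one]
        rw [h2] at h1
        show ENNReal.ofReal t < ENNReal.ofReal |‖x‖ ^ η - b|
        rw [ENNReal.ofReal_lt_ofReal_iff_of_nonneg ht0.le]
        calc t < t + 1 := by linarith
          _ ≤ ‖x‖ ^ η - b := by
              have hb2 := le_abs_self b
              linarith
          _ ≤ |‖x‖ ^ η - b| := le_abs_self _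
    have hcontent : ENNReal.ofReal ρ ^ d ≤ hausdorffContent n d
        {x ∈ ball (0 : EuclideanSpace ℝ (Fin n)) 1 \ {0} |
          ENNReal.ofReal t < ofRealFun (fun x => ‖x‖ ^ η - b) x} :=
      (hc_ge (by omega) hd hdn hρpos).trans (hc_mono _ hsub)
    have hqs : (0:ℝ) ≤ q / s := le_of_lt (div_pos hq hs)
    have hstep : ENNReal.ofReal (ρ ^ (d * (q / s)))
        ≤ hausdorffContent n d
            {x ∈ ball (0 : EuclideanSpace ℝ (Fin n)) 1 \ {0} |
              ENNReal.ofReal t < ofRealFun (fun x => ‖x‖ ^ η - b) x} ^ (q / s) := by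
      rw [← ENNReal.ofReal_rpow_of_nonneg hρpos.le (by positivity), ENNReal.rpow_mul]
      exact ENNReal.rpow_le_rpow hcontent hqs
    have hrw : ρ ^ (d * (q / s)) = (t + |b| + 1) ^ α := by
      rw [hρ, ← Real.rpow_mul hbase0.le]
      congr 1
      rw [hα]
      field_simp
    have hreal : (2 + |b|) ^ α * t⁻¹ ≤ t ^ q * (t + |b| + 1) ^ α * t⁻¹ := by
      have h5 : t + |b| + 1 ≤ (2 + |b|) * t := by nlinarith
      have h6 : ((2 + |b|) * t) ^ α ≤ (t + |b| + 1) ^ α :=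
        Real.rpow_le_rpow_of_nonpos hbase0 h5 hα0
      have h7 : ((2 + |b|) * t) ^ α = (2 + |b|) ^ α * t ^ α :=
        Real.mul_rpow (by positivity) ht0.le
      have h8 : (1:ℝ) ≤ t ^ (q + α) := Real.one_le_rpow ht.le hαq
      rw [Real.rpow_add ht0] at h8
      have h9 : (2 + |b|) ^ α ≤ t ^ q * ((2 + |b|) * t) ^ α := by
        rw [h7, ← mul_assoc, mul_comm (t ^ q) ((2 + |b|) ^ α), mul_assoc]
        nth_rewrite 1 [← mul_one ((2 + |b|) ^ α)]
        exact mul_le_mul_of_nonneg_left h8 hCpos.le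
      have h10 : t ^ q * ((2 + |b|) * t) ^ α ≤ t ^ q * (t + |b| + 1) ^ α :=
        mul_le_mul_of_nonneg_left h6 (Real.rpow_nonneg ht0.le _)
      have := h9.trans h10
      exact mul_le_mul_of_nonneg_right this (inv_nonneg.mpr ht0.le)
    calc ENNReal.ofReal ((2 + |b|) ^ α * t⁻¹)
        ≤ ENNReal.ofReal (t ^ q * (t + |b| + 1) ^ α * t⁻¹) := ENNReal.ofReal_le_ofReal hreal
      _ = ENNReal.ofReal (t ^ q) * ENNReal.ofReal ((t + |b| + 1) ^ α) * ENNReal.ofReal t⁻¹ := by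
          rw [ENNReal.ofReal_mul (by positivity), ENNReal.ofReal_mul (by positivity)]
      _ ≤ _ := by
          refine mul_le_mul' (mul_le_mul' le_rfl ?_) le_rfl
          rw [← hrw]
          exact hstep
  rw [lorNorm]
  have hI : ∫⁻ t in Ioi (0:ℝ),
      ENNReal.ofReal (t ^ q) * hausdorffContent n d
        {x ∈ ball (0 : EuclideanSpace ℝ (Fin n)) 1 \ {0} |
          ENNReal.ofReal t < ofRealFun (fun x => ‖x‖ ^ η - b) x} ^ (q / s)
      * ENNReal.ofReal t⁻¹ = ⊤ := by
    rw [eq_top_iff, ← aux_lintegral_inv_top hCpos]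
    exact le_trans (setLIntegral_mono' measurableSet_Ioi hmain)
      (lintegral_mono_set (Ioi_subset_Ioi zero_le_one))
  rw [hI, ENNReal.mul_top (by simp [ENNReal.ofReal_eq_zero]; linarith),
    ENNReal.top_rpow_of_pos (by positivity)]

lemma part_b {n : ℕ} (hn : 2 ≤ n) {δ p η qt : ℝ} (hδ : 0 < δ) (hp : 0 < p)
    (hη1 : 1 - δ / p < η) (hη0 : η < 0) (hq : 0 < qt) :
    lorNorm (hausdorffContent n δ) p qt (ball (0 : EuclideanSpace ℝ (Fin n)) 1 \ {0})
      (fun x => ENNReal.ofReal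
        ‖gradient (fun y : EuclideanSpace ℝ (Fin n) => ‖y‖ ^ η) x‖) < ⊤ := by
  have hηpos : 0 < |η| := abs_pos.mpr hη0.ne
  have ha : η - 1 < 0 := by linarith
  have ha' : -(δ / p) < η - 1 := by linarith
  set γ : ℝ := δ * qt / p / (η - 1) with hγ
  have hγ0 : γ < 0 := div_neg_of_pos_of_neg (by positivity) ha
  have hγq : qt + γ < 0 := by
    have h1 : γ < -qt := by
      rw [hγ, div_lt_iff_of_neg ha]
      have h2 : qt * (1 - η) < qt * (δ / p) := by
        apply mul_lt_mul_of_pos_left _ hq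
        linarith
      calc -qt * (η - 1) = qt * (1 - η) := by ring
        _ < qt * (δ / p) := h2
        _ = δ * qt / p := by ring
    linarith
  -- notation for the distribution set
  set F : EuclideanSpace ℝ (Fin n) → ℝ≥0∞ := fun x => ENNReal.ofReal
    ‖gradient (fun y : EuclideanSpace ℝ (Fin n) => ‖y‖ ^ η) x‖ with hF
  set A : ℝ → Set (EuclideanSpace ℝ (Fin n)) := fun t =>
    {x ∈ ball (0 : EuclideanSpace ℝ (Fin n)) 1 \ {0} | ENNReal.ofReal t < F x} with hA
  have hH1 : ∀ t : ℝ, hausdorffContent n δ (A t) ≤ 1 := by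
    intro t
    have h1 : A t ⊆ ball (0 : EuclideanSpace ℝ (Fin n)) 1 := fun x hx => hx.1.1
    have := hc_le hδ (0 : EuclideanSpace ℝ (Fin n)) 1 h1
    rwa [ENNReal.ofReal_one, ENNReal.one_rpow] at this
  have hH2 : ∀ t : ℝ, 0 < t →
      hausdorffContent n δ (A t) ≤ ENNReal.ofReal ((t / |η|) ^ (1 / (η - 1))) ^ δ := by
    intro t ht
    set r₀ : ℝ := (t / |η|) ^ (1 / (η - 1)) with hr₀
    have htη : 0 < t / |η| := div_pos ht hηpos
    have hr₀pos : 0 < r₀ := Real.rpow_pos_of_pos htη _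
    refine hc_le hδ (0 : EuclideanSpace ℝ (Fin n)) r₀ ?_
    rintro x ⟨⟨hx1, hx2⟩, hx3⟩
    have hx0 : x ≠ 0 := by simpa using hx2
    have hnx : 0 < ‖x‖ := norm_pos_iff.mpr hx0
    have hlt : t < |η| * ‖x‖ ^ (η - 1) := by
      rw [hF] at hx3
      simp only at hx3
      rw [aux_gradient_norm η hx0, ENNReal.ofReal_lt_ofReal_iff_of_nonneg ht.le] at hx3
      exact hx3
    have hlt2 : t / |η| < ‖x‖ ^ (η - 1) := (div_lt_iff₀' hηpos).mpr hlt
    rw [mem_ball, dist_zero_right]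
    by_contra hcon
    push_neg at hcon
    have h3 : ‖x‖ ^ (η - 1) ≤ r₀ ^ (η - 1) :=
      Real.rpow_le_rpow_of_nonpos hr₀pos hcon ha.le
    have h4 : r₀ ^ (η - 1) = t / |η| := by
      rw [hr₀, ← Real.rpow_mul htη.le, one_div, inv_mul_cancel₀ (ne_of_lt ha), Real.rpow_one]
    rw [h4] at h3
    linarith
  rw [lorNorm]
  refine ENNReal.rpow_lt_top_of_nonneg (by positivity) (ENNReal.mul_ne_top ENNReal.ofReal_ne_top ?_)
  have hsplit : Ioi (0:ℝ) = Ioc 0 1 ∪ Ioi 1 := (Ioc_union_Ioi_eq_Ioi zero_le_one).symm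
  have hsetrw : ∀ t : ℝ, {x ∈ ball (0 : EuclideanSpace ℝ (Fin n)) 1 \ {0} |
      ENNReal.ofReal t < F x} = A t := fun t => rfl
  rw [hsplit, lintegral_union measurableSet_Ioi (Ioc_disjoint_Ioi le_rfl)]
  have hfin1 : ∫⁻ t in Ioc (0:ℝ) 1,
      ENNReal.ofReal (t ^ qt) * hausdorffContent n δ (A t) ^ (qt / p)
        * ENNReal.ofReal t⁻¹ < ⊤ := by
    have hbound : ∀ t ∈ Ioc (0:ℝ) 1,
        ENNReal.ofReal (t ^ qt) * hausdorffContent n δ (A t) ^ (qt / p)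
          * ENNReal.ofReal t⁻¹ ≤ ENNReal.ofReal (t ^ (qt - 1)) := by
      intro t ht
      have ht0 : 0 < t := ht.1
      have h1 : hausdorffContent n δ (A t) ^ (qt / p) ≤ 1 := by
        rw [← ENNReal.one_rpow (qt / p)]
        exact ENNReal.rpow_le_rpow (hH1 t) (by positivity)
      calc ENNReal.ofReal (t ^ qt) * hausdorffContent n δ (A t) ^ (qt / p)
            * ENNReal.ofReal t⁻¹
          ≤ ENNReal.ofReal (t ^ qt) * 1 * ENNReal.ofReal t⁻¹ :=
            mul_le_mul' (mul_le_mul' le_rfl h1) le_rfl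
        _ = ENNReal.ofReal (t ^ qt * t⁻¹) := by
            rw [mul_one, ← ENNReal.ofReal_mul (by positivity)]
        _ = ENNReal.ofReal (t ^ (qt - 1)) := by
            rw [← Real.rpow_neg_one t, ← Real.rpow_add ht0, sub_eq_add_neg]
    refine lt_of_le_of_lt (setLIntegral_mono' measurableSet_Ioc hbound) ?_
    have hint : IntegrableOn (fun t : ℝ => t ^ (qt - 1)) (Ioc (0:ℝ) 1) := by
      rw [integrableOn_Ioc_iff_integrableOn_Ioo]
      exact (intervalIntegral.integrableOn_Ioo_rpow_iff one_pos).mpr (by linarith)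
    exact hint.setLIntegral_lt_top
  have hfin2 : ∫⁻ t in Ioi (1:ℝ),
      ENNReal.ofReal (t ^ qt) * hausdorffContent n δ (A t) ^ (qt / p)
        * ENNReal.ofReal t⁻¹ < ⊤ := by
    have hbound : ∀ t ∈ Ioi (1:ℝ),
        ENNReal.ofReal (t ^ qt) * hausdorffContent n δ (A t) ^ (qt / p)
          * ENNReal.ofReal t⁻¹ ≤ ENNReal.ofReal (|η| ^ (-γ) * t ^ (qt + γ - 1)) := by
      intro t ht
      rw [mem_Ioi] at ht
      have ht0 : 0 < t := lt_trans one_pos ht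
      have htη : 0 < t / |η| := div_pos ht0 hηpos
      have h1 : hausdorffContent n δ (A t) ^ (qt / p)
          ≤ ENNReal.ofReal ((t / |η|) ^ γ) := by
        refine le_trans (ENNReal.rpow_le_rpow (hH2 t ht0) (by positivity)) ?_
        rw [← ENNReal.rpow_mul,
          ENNReal.ofReal_rpow_of_nonneg (Real.rpow_pos_of_pos htη _).le
            (by positivity), ← Real.rpow_mul htη.le]
        refine le_of_eq ?_
        congr 1
        rw [hγ]
        field_simp
      calc ENNReal.ofReal (t ^ qt) * hausdorffContent n δ (A t) ^ (qt / p)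
            * ENNReal.ofReal t⁻¹
          ≤ ENNReal.ofReal (t ^ qt) * ENNReal.ofReal ((t / |η|) ^ γ)
            * ENNReal.ofReal t⁻¹ := mul_le_mul' (mul_le_mul' le_rfl h1) le_rfl
        _ = ENNReal.ofReal (t ^ qt * (t / |η|) ^ γ * t⁻¹) := by
            rw [← ENNReal.ofReal_mul (by positivity), ← ENNReal.ofReal_mul (by positivity)]
        _ = ENNReal.ofReal (|η| ^ (-γ) * t ^ (qt + γ - 1)) := by
            congr 1
            rw [Real.div_rpow ht0.le hηpos.le, Real.rpow_neg hηpos.le,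
              show qt + γ - 1 = qt + γ + -1 by ring, Real.rpow_add ht0, Real.rpow_add ht0,
              Real.rpow_neg_one]
            ring
    refine lt_of_le_of_lt (setLIntegral_mono' measurableSet_Ioi hbound) ?_
    have hint : IntegrableOn (fun t : ℝ => |η| ^ (-γ) * t ^ (qt + γ - 1)) (Ioi (1:ℝ)) :=
      ((integrableOn_Ioi_rpow_iff one_pos).mpr (by linarith)).const_mul _
    exact hint.setLIntegral_lt_top
  exact ENNReal.add_ne_top.mpr ⟨hfin1.ne, hfin2.ne⟩

/-- Sharpness of the exponent `p(δ-μp)/(δ-p)` in the Poincaré–Sobolev inequality: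
on `Ω = B(0,1) \ {0}`, for any larger exponent `s`, the function `u₀(x) = |x|^η`
(for suitable `η`) is `C¹` on `Ω`, has all `L^{s,q}(Ω, H_∞^{δ-μp})` distances to constants
infinite, yet `‖∇u₀‖_{L^{p,q̃}(Ω, H_∞^δ)}` is finite. -/
theorem poincare_sobolev_exponent_sharp (n : ℕ) (hn : 2 ≤ n) (δ μ p s : ℝ)
    (hδ0 : 0 < δ) (hδn : δ ≤ n) (hμ0 : 0 ≤ μ) (hμ1 : μ < 1)
    (hp1 : δ / n < p) (hp2 : p < δ)
    (hs : p * (δ - μ * p) / (δ - p) < s) :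
    1 - δ / p < -(δ - μ * p) / s ∧
    ∀ η : ℝ, 1 - δ / p < η → η ≤ -(δ - μ * p) / s →
      ContDiffOn ℝ 1 (fun x : EuclideanSpace ℝ (Fin n) => ‖x‖ ^ η)
        (Metric.ball 0 1 \ {0}) ∧
      (∀ b : ℝ, ∀ q : ℝ, 0 < q →
        lorNorm (hausdorffContent n (δ - μ * p)) s q
          (Metric.ball (0 : EuclideanSpace ℝ (Fin n)) 1 \ {0})
          (ofRealFun fun x => ‖x‖ ^ η - b) = ⊤) ∧
      (∀ qt : ℝ, 0 < qt →
        lorNorm (hausdorffContent n δ) p qt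
          (Metric.ball (0 : EuclideanSpace ℝ (Fin n)) 1 \ {0})
          (fun x => ENNReal.ofReal
            ‖gradient (fun y : EuclideanSpace ℝ (Fin n) => ‖y‖ ^ η) x‖) < ⊤) := by
  have hn0 : (0:ℝ) < n := by positivity
  have hp0 : (0:ℝ) < p := lt_trans (div_pos hδ0 hn0) hp1
  have hδp : (0:ℝ) < δ - p := by linarith
  have hμp : μ * p < p := by
    calc μ * p < 1 * p := mul_lt_mul_of_pos_right hμ1 hp0
      _ = p := one_mul p
  have hd : (0:ℝ) < δ - μ * p := by linarith
  have hss : (0:ℝ) < s :=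
    lt_of_le_of_lt (div_nonneg (mul_nonneg hp0.le hd.le) hδp.le) hs
  have hs' : p * (δ - μ * p) < s * (δ - p) := by
    rw [div_lt_iff₀ hδp] at hs
    linarith
  have harith : 1 - δ / p < -(δ - μ * p) / s := by
    have e1 : 1 - δ / p = -((δ - p) / p) := by field_simp; ring
    rw [e1, neg_div, neg_lt_neg_iff, div_lt_div_iff₀ hss hp0]
    nlinarith
  refine ⟨harith, fun η hη1 hη2 => ?_⟩
  have hηneg : η < 0 :=
    lt_of_le_of_lt hη2 (by rw [neg_div]; exact neg_neg_of_pos (div_pos hd hss))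
  refine ⟨?_, ?_, ?_⟩
  · intro x hx
    have hx0 : x ≠ 0 := fun h => hx.2 (by simp [h])
    exact ((contDiffAt_norm ℝ hx0).rpow_const_of_ne
      (norm_ne_zero_iff.mpr hx0)).contDiffWithinAt
  · intro b q hq
    exact part_a hn b q hd (by have := mul_nonneg hμ0 hp0.le; linarith) hss hη2 hq
  · intro qt hqt
    exact part_b hn hδ0 hp0 hη1 hηneg hqt
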